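/- Let M and M̃ be N×N real symmetric matrices. Fix a threshold μ ∈ ℝ, let Y be the span of the eigenvectors of M̃ with eigenvalue at least μ (assume Y ≠ ℝ^N), let λ_s be the largest eigenvalue of M̃ that is strictly less than μ, and let P_Y be the orthogonal projection onto Y. If w is a unit eigenvector of M with eigenvalue λ > λ_s, then ‖w − P_Y w‖ ≤ ‖(M̃ − M)w‖ / (λ − λ_s). -/

import Mathlib

open Matrix Finset

open scoped RealInnerProductSpace in
private lemma symm_inner_mulVec {N : ℕ} {Mt : Matrix (Fin N) (Fin N) ℝ}
    (hMt : Mt.IsSymm) (x y : EuclideanSpace ℝ (Fin N)) :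
    ⟪(show EuclideanSpace ℝ (Fin N) from WithLp.toLp 2 (Mt.mulVec x)), y⟫
      = ⟪x, (show EuclideanSpace ℝ (Fin N) from WithLp.toLp 2 (Mt.mulVec y))⟫ := by
  simp only [PiLp.inner_apply, RCLike.inner_apply, conj_trivial]
  have h1 : (Mt.mulVec x) ⬝ᵥ y = (x ᵥ* Mtᵀ) ⬝ᵥ y := by
    rw [Matrix.vecMul_transpose]
  have h2 : x ⬝ᵥ (Mt.mulVec y) = (x ᵥ* Mt) ⬝ᵥ y := (Matrix.dotProduct_mulVec x Mt y)
  have := hMt.eq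
  have h3 : (Mt.mulVec x) ⬝ᵥ y = x ⬝ᵥ (Mt.mulVec y) := h1.trans (by rw [hMt.eq, h2])
  simp only [dotProduct] at h3
  convert h3 using 1 <;> exact Finset.sum_congr rfl fun i _ => mul_comm _ _

set_option maxHeartbeats 1000000 in
/-- sin-θ / Davis–Kahan type bound. Let `M`, `M̃` be symmetric, let
`Y` be the span of eigenvectors of `M̃` with eigenvalue at least `μ` (with `Y ≠ ⊤`),
and let `λ_s` be the largest eigenvalue of `M̃` strictly below `μ`. If `w` is a unit
eigenvector of `M` with eigenvalue `λ > λ_s`, then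
`‖w − P_Y w‖ ≤ ‖(M̃ − M)w‖ / (λ − λ_s)`. -/
theorem sin_theta_eigenspace_perturbation
    {N : ℕ} (M Mt : Matrix (Fin N) (Fin N) ℝ)
    (hM : M.IsSymm) (hMt : Mt.IsSymm) (μ : ℝ)
    (Y : Submodule ℝ (EuclideanSpace ℝ (Fin N)))
    (hY : Y = Submodule.span ℝ {v : EuclideanSpace ℝ (Fin N) |
        v ≠ 0 ∧ ∃ ν : ℝ, μ ≤ ν ∧ Mt.mulVec v = ν • v})
    (hYne : Y ≠ ⊤)
    (lam_s : ℝ)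
    (hs_eig : ∃ v : EuclideanSpace ℝ (Fin N), v ≠ 0 ∧ Mt.mulVec v = lam_s • v)
    (hs_lt : lam_s < μ)
    (hs_max : ∀ (ν : ℝ) (v : EuclideanSpace ℝ (Fin N)),
        v ≠ 0 → Mt.mulVec v = ν • v → ν < μ → ν ≤ lam_s)
    (w : EuclideanSpace ℝ (Fin N)) (hw : ‖w‖ = 1) (lam : ℝ)
    (hweig : M.mulVec w = lam • w) (hlam : lam_s < lam) :
    ‖w - (Y.orthogonalProjectionOnto w : EuclideanSpace ℝ (Fin N))‖
      ≤ ‖(show EuclideanSpace ℝ (Fin N) from WithLp.toLp 2 ((Mt - M).mulVec w))‖ / (lam - lam_s) := by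
  have hpos : (0:ℝ) < lam - lam_s := by linarith
  set P : EuclideanSpace ℝ (Fin N) := (Y.orthogonalProjectionOnto w : EuclideanSpace ℝ (Fin N))
    with hP
  set z : EuclideanSpace ℝ (Fin N) := w - P with hz
  set u : EuclideanSpace ℝ (Fin N) := (show EuclideanSpace ℝ (Fin N) from WithLp.toLp 2 ((Mt - M).mulVec w))
    with hu
  by_cases hz0 : z = 0
  · rw [hz0]
    simp only [norm_zero]
    exact div_nonneg (norm_nonneg _) hpos.le
  -- basic facts
  have hzY : z ∈ Yᗮ := Y.sub_starProjection_mem_orthogonal w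
  have hPY : P ∈ Y := (Y.orthogonalProjectionOnto w).2
  -- Y is invariant under Mt
  have hinv : ∀ y ∈ Y, (show EuclideanSpace ℝ (Fin N) from WithLp.toLp 2 (Mt.mulVec y)) ∈ Y := by
    rw [hY]
    intro y hy
    induction hy using Submodule.span_induction with
    | mem v hv =>
        obtain ⟨hv0, ν, hν, hveq⟩ := hv
        show (show EuclideanSpace ℝ (Fin N) from WithLp.toLp 2 (Mt.mulVec v)) ∈ _
        have : (show EuclideanSpace ℝ (Fin N) from WithLp.toLp 2 (Mt.mulVec v)) = ν • v := congrArg (WithLp.toLp 2) hveq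
        rw [this]
        exact Submodule.smul_mem _ _ (Submodule.subset_span ⟨hv0, ν, hν, hveq⟩)
    | zero =>
        have : (show EuclideanSpace ℝ (Fin N) from WithLp.toLp 2 (Mt.mulVec (0 : EuclideanSpace ℝ (Fin N)))) = 0 :=
          congrArg (WithLp.toLp 2) (Matrix.mulVec_zero Mt)
        rw [this]; exact Submodule.zero_mem _
    | add a b _ _ iha ihb =>
        have : (show EuclideanSpace ℝ (Fin N) from WithLp.toLp 2 (Mt.mulVec (a + b : EuclideanSpace ℝ (Fin N))))
            = (show EuclideanSpace ℝ (Fin N) from WithLp.toLp 2 (Mt.mulVec a))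
              + (show EuclideanSpace ℝ (Fin N) from WithLp.toLp 2 (Mt.mulVec b)) := congrArg (WithLp.toLp 2) (Matrix.mulVec_add Mt a b)
        rw [this]; exact Submodule.add_mem _ iha ihb
    | smul c a _ iha =>
        have : (show EuclideanSpace ℝ (Fin N) from WithLp.toLp 2 (Mt.mulVec (c • a : EuclideanSpace ℝ (Fin N))))
            = c • (show EuclideanSpace ℝ (Fin N) from WithLp.toLp 2 (Mt.mulVec a)) := by
          exact congrArg (WithLp.toLp 2) (Matrix.mulVec_smul Mt c a)
        rw [this]; exact Submodule.smul_mem _ _ iha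
  -- hermitian eigen-decomposition of Mt
  have hH : Mt.IsHermitian := by
    rw [Matrix.IsHermitian, Matrix.conjTranspose_eq_transpose_of_trivial]; exact hMt
  set e := hH.eigenvectorBasis with he
  set d := hH.eigenvalues with hd
  have heig : ∀ i, (show EuclideanSpace ℝ (Fin N) from WithLp.toLp 2 (Mt.mulVec (e i))) = d i • e i := by
    intro i
    have := hH.mulVec_eigenvectorBasis i
    exact congrArg (WithLp.toLp 2) this
  have heY : ∀ i, μ ≤ d i → (e i : EuclideanSpace ℝ (Fin N)) ∈ Y := by
    intro i hi
    rw [hY]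
    exact Submodule.subset_span ⟨e.orthonormal.ne_zero i, d i, hi, hH.mulVec_eigenvectorBasis i⟩
  have hds : ∀ i, d i < μ → d i ≤ lam_s := fun i hi =>
    hs_max (d i) (e i) (e.orthonormal.ne_zero i) (hH.mulVec_eigenvectorBasis i) hi
  -- inner products
  have hzi : ∀ i, μ ≤ d i → (inner ℝ (e i) z : ℝ) = 0 := fun i hi =>
    (Submodule.mem_orthogonal Y z).1 hzY _ (heY i hi)
  have hsymm := symm_inner_mulVec (N := N) hMt
  set Mtz : EuclideanSpace ℝ (Fin N) := (show EuclideanSpace ℝ (Fin N) from WithLp.toLp 2 (Mt.mulVec z))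
    with hMtz
  -- quadratic form bound on the orthogonal complement
  have hquad : (inner ℝ Mtz z : ℝ) ≤ lam_s * inner ℝ z z := by
    have h1 : (inner ℝ Mtz z : ℝ) = ∑ i, (inner ℝ Mtz (e i) : ℝ) * inner ℝ (e i) z :=
      (e.sum_inner_mul_inner Mtz z).symm
    have h2 : (inner ℝ z z : ℝ) = ∑ i, (inner ℝ z (e i) : ℝ) * inner ℝ (e i) z :=
      (e.sum_inner_mul_inner z z).symm
    rw [h1, h2, Finset.mul_sum]
    apply Finset.sum_le_sum
    intro i _
    have hterm : (inner ℝ Mtz (e i) : ℝ) = d i * inner ℝ z (e i) := by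
      rw [hMtz, hsymm z (e i)]
      rw [show (show EuclideanSpace ℝ (Fin N) from WithLp.toLp 2 (Mt.mulVec (e i))) = d i • e i from heig i]
      exact real_inner_smul_right z (e i) (d i)
    rw [hterm]
    rcases lt_or_ge (d i) μ with hlt | hge
    · have h0 : (0:ℝ) ≤ (inner ℝ z (e i) : ℝ) * inner ℝ (e i) z := by
        rw [real_inner_comm z (e i)]; exact mul_self_nonneg _
      have := hds i hlt
      nlinarith [h0]
    · rw [hzi i hge]; ring_nf; simp
  -- ⟪z, w⟫ = ⟪z, z⟫
  have hzw : (inner ℝ z w : ℝ) = inner ℝ z z := by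
    have hw' : w = z + P := by rw [hz]; abel
    have h0 : (inner ℝ z P : ℝ) = 0 := by
      rw [real_inner_comm]
      exact (Submodule.mem_orthogonal Y z).1 hzY _ hPY
    rw [hw', inner_add_right, h0, add_zero]
  -- ⟪Mt z, P⟫ = 0
  have hMtzP : (inner ℝ Mtz P : ℝ) = 0 := by
    rw [hMtz, hsymm z P, real_inner_comm]
    exact (Submodule.mem_orthogonal Y z).1 hzY _ (hinv P hPY)
  -- key computation
  have hMtw : (show EuclideanSpace ℝ (Fin N) from WithLp.toLp 2 (Mt.mulVec w)) = u + lam • w := by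
    rw [hu]
    have : (show EuclideanSpace ℝ (Fin N) from WithLp.toLp 2 ((Mt - M).mulVec w))
        = (show EuclideanSpace ℝ (Fin N) from WithLp.toLp 2 (Mt.mulVec w))
          - (show EuclideanSpace ℝ (Fin N) from WithLp.toLp 2 (M.mulVec w)) := congrArg (WithLp.toLp 2) (Matrix.sub_mulVec Mt M w)
    rw [this, show (show EuclideanSpace ℝ (Fin N) from WithLp.toLp 2 (M.mulVec w)) = lam • w from congrArg (WithLp.toLp 2) hweig]
    abel
  have hkey : (inner ℝ z u : ℝ) ≤ -((lam - lam_s) * inner ℝ z z) := by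
    have h1 : (inner ℝ z (show EuclideanSpace ℝ (Fin N) from WithLp.toLp 2 (Mt.mulVec w)) : ℝ)
        = inner ℝ z u + lam * inner ℝ z z := by
      rw [hMtw, inner_add_right, real_inner_smul_right, hzw]
    have h2 : (inner ℝ z (show EuclideanSpace ℝ (Fin N) from WithLp.toLp 2 (Mt.mulVec w)) : ℝ)
        = inner ℝ Mtz w := by rw [hMtz, hsymm z w]
    have hw' : w = z + P := by rw [hz]; abel
    have h3 : (inner ℝ Mtz w : ℝ) = inner ℝ Mtz z := by
      rw [hw', inner_add_right, hMtzP, add_zero]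
    have := h1.symm.trans (h2.trans h3)
    -- inner z u + lam * inner z z = inner Mtz z ≤ lam_s * inner z z
    nlinarith [hquad]
  -- conclude
  have hzz : (inner ℝ z z : ℝ) = ‖z‖ * ‖z‖ := real_inner_self_eq_norm_mul_norm z
  have hCS : -(inner ℝ z u : ℝ) ≤ ‖z‖ * ‖u‖ := by
    have := real_inner_le_norm z (-u)
    rwa [inner_neg_right, norm_neg] at this
  have hnz : (0:ℝ) < ‖z‖ := norm_pos_iff.mpr hz0
  have hmain : (lam - lam_s) * (‖z‖ * ‖z‖) ≤ ‖z‖ * ‖u‖ := by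
    rw [← hzz]; nlinarith [hkey, hCS]
  rw [le_div_iff₀ hpos]
  nlinarith [hmain, hnz]
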